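/- Let S be a finite set with at least two elements, let d ≥ 1, and let μ be a probability measure on Ω = S^{ℤ^d} (product σ-algebra). Suppose there is δ > 0 such that for every site i ∈ ℤ^d and every value a ∈ S, the conditional expectation (with respect to μ) of the indicator of the event {x : x_i = a}, given the σ-algebra generated by the coordinates (x_j)_{j ≠ i}, is at least δ, μ-almost everywhere. Then for every configuration z ∈ Ω and every finite set Λ ⊂ ℤ^d, μ({x ∈ Ω : x_i = z_i for all i ∈ Λ}) ≤ (1−δ)^{|Λ|}. (In particular, uniformly non-null measures have the alignment-suppression property: −ln μ(z_Λ) grows at least linearly in |Λ|.) -/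

import Mathlib

open MeasureTheory

namespace CAPaper

/-- a uniformly non-null probability measure on `S^{ℤ^d}` (single-site
conditional probabilities bounded below by `δ` a.e.) has the alignment-suppression
property: every cylinder `z_Λ` has probability at most `(1−δ)^{|Λ|}`. -/
theorem stmt16 (d : ℕ) (hd : 1 ≤ d) (S : Type*) [Fintype S] [Nontrivial S]
    [MeasurableSpace S] [MeasurableSingletonClass S]
    (μ : Measure ((Fin d → ℤ) → S)) (hprob : IsProbabilityMeasure μ)
    (δ : ℝ) (hδ : 0 < δ)
    (h : ∀ (i : Fin d → ℤ) (a : S),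
      ∀ᵐ x ∂μ, δ ≤
        (μ[Set.indicator {y : (Fin d → ℤ) → S | y i = a} (fun _ => (1 : ℝ)) |
          MeasurableSpace.comap
            (fun (x : (Fin d → ℤ) → S) (j : {j : Fin d → ℤ // j ≠ i}) => x j)
            MeasurableSpace.pi]) x) :
    ∀ (z : (Fin d → ℤ) → S) (Λ : Finset (Fin d → ℤ)),
      μ {x | ∀ i ∈ Λ, x i = z i} ≤ ENNReal.ofReal ((1 - δ) ^ Λ.card) := by
  classical
  have hmle : ∀ i : Fin d → ℤ,
      (MeasurableSpace.comap
        (fun (x : (Fin d → ℤ) → S) (j : {j : Fin d → ℤ // j ≠ i}) => x j)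
        MeasurableSpace.pi) ≤ MeasurableSpace.pi :=
    fun i => (measurable_pi_lambda _ (fun j => measurable_pi_apply j.1)).comap_le
  have hAmeas : ∀ (i : Fin d → ℤ) (a : S),
      MeasurableSet {y : (Fin d → ℤ) → S | y i = a} := by
    intro i a
    have : {y : (Fin d → ℤ) → S | y i = a} = (fun y => y i) ⁻¹' {a} := by
      ext y; simp
    rw [this]
    exact (measurable_pi_apply i) (measurableSet_singleton a)
  have hint : ∀ (i : Fin d → ℤ) (a : S),
      Integrable (Set.indicator {y : (Fin d → ℤ) → S | y i = a} (fun _ => (1:ℝ))) μ :=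
    fun i a => (integrable_const (1:ℝ)).indicator (hAmeas i a)
  -- key bound: conditional probabilities are also bounded above by 1 - δ
  have key : ∀ (i : Fin d → ℤ) (a : S),
      ∀ᵐ x ∂μ,
        (μ[Set.indicator {y : (Fin d → ℤ) → S | y i = a} (fun _ => (1 : ℝ)) |
          MeasurableSpace.comap
            (fun (x : (Fin d → ℤ) → S) (j : {j : Fin d → ℤ // j ≠ i}) => x j)
            MeasurableSpace.pi]) x ≤ 1 - δ := by
    intro i a
    obtain ⟨b, hb⟩ := exists_ne a
    have hle : Set.indicator {y : (Fin d → ℤ) → S | y i = a} (fun _ => (1:ℝ)) ≤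
        (fun _ => (1:ℝ)) - Set.indicator {y : (Fin d → ℤ) → S | y i = b} (fun _ => (1:ℝ)) := by
      intro x
      simp only [Pi.sub_apply]
      by_cases hx : x i = a
      · have hxb : ¬ x i = b := fun hc => hb (hc ▸ hx ▸ rfl)
        simp [Set.indicator, hx, hxb, hb, Ne.symm hb]
      · by_cases hxb : x i = b <;> simp [Set.indicator, hx, hxb, hb, Ne.symm hb]
    have h1 := condExp_mono
      (μ := μ)
      (m := MeasurableSpace.comap
        (fun (x : (Fin d → ℤ) → S) (j : {j : Fin d → ℤ // j ≠ i}) => x j)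
        MeasurableSpace.pi)
      (hint i a)
      ((integrable_const (1:ℝ)).sub (hint i b)) (Filter.Eventually.of_forall hle)
    have h2 := condExp_sub
      (μ := μ)
      (m := MeasurableSpace.comap
        (fun (x : (Fin d → ℤ) → S) (j : {j : Fin d → ℤ // j ≠ i}) => x j)
        MeasurableSpace.pi)
      (integrable_const (1:ℝ)) (hint i b)
    have h3 := condExp_const (μ := μ) (hmle i) (1:ℝ)
    filter_upwards [h1, h2, h i b] with x hx1 hx2 hxb
    rw [hx2] at hx1
    simp only [Pi.sub_apply, h3] at hx1
    linarith
  -- 1 - δ is nonnegative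
  have hδ2 : 0 ≤ 1 - δ := by
    haveI : (ae μ).NeBot := ae_neBot.mpr (IsProbabilityMeasure.ne_zero μ)
    obtain ⟨a, b, hab⟩ := exists_pair_ne S
    obtain ⟨x, hx1, hx2⟩ := ((h (fun _ => 0) a).and (key (fun _ => 0) a)).exists
    linarith
  intro z Λ
  induction Λ using Finset.induction_on with
  | empty => simp
  | @insert i s his ih =>
    have hAB : {x : (Fin d → ℤ) → S | ∀ j ∈ insert i s, x j = z j}
        = {y : (Fin d → ℤ) → S | y i = z i} ∩ {x : (Fin d → ℤ) → S | ∀ j ∈ s, x j = z j} := by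
      ext x
      simp only [Set.mem_inter_iff, Set.mem_setOf_eq, Finset.mem_insert]
      constructor
      · intro hx
        exact ⟨hx i (Or.inl rfl), fun j hj => hx j (Or.inr hj)⟩
      · rintro ⟨h1, h2⟩ j (rfl | hj)
        · exact h1
        · exact h2 j hj
    have hB : MeasurableSet[MeasurableSpace.comap
        (fun (x : (Fin d → ℤ) → S) (j : {j : Fin d → ℤ // j ≠ i}) => x j)
        MeasurableSpace.pi] {x : (Fin d → ℤ) → S | ∀ j ∈ s, x j = z j} := by
      refine ⟨{y : {j : Fin d → ℤ // j ≠ i} → S |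
        ∀ j : {j : Fin d → ℤ // j ≠ i}, j.1 ∈ s → y j = z j.1}, ?_, ?_⟩
      · have he : {y : {j : Fin d → ℤ // j ≠ i} → S | ∀ j, j.1 ∈ s → y j = z j.1}
            = ⋂ j : {j : Fin d → ℤ // j ≠ i}, {y | j.1 ∈ s → y j = z j.1} := by
          ext y; simp [Set.mem_iInter]
        rw [he]
        refine MeasurableSet.iInter fun j => ?_
        by_cases hj : j.1 ∈ s
        · simp only [hj, true_implies]
          have : {y : {j : Fin d → ℤ // j ≠ i} → S | y j = z j.1}
              = (fun y => y j) ⁻¹' {z j.1} := by ext y; simp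
          rw [this]
          exact (measurable_pi_apply j) (measurableSet_singleton _)
        · simp [hj]
      · ext x
        simp only [Set.mem_preimage, Set.mem_setOf_eq]
        constructor
        · intro hx j hj
          exact hx ⟨j, fun hji => his (hji ▸ hj)⟩ hj
        · intro hx j hj
          exact hx j.1 hj
    have hBmeas : MeasurableSet {x : (Fin d → ℤ) → S | ∀ j ∈ s, x j = z j} :=
      (hmle i) _ hB
    have hstep : μ ({y : (Fin d → ℤ) → S | y i = z i}
          ∩ {x : (Fin d → ℤ) → S | ∀ j ∈ s, x j = z j})
        ≤ ENNReal.ofReal (1 - δ) * μ {x : (Fin d → ℤ) → S | ∀ j ∈ s, x j = z j} := by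
      set B : Set ((Fin d → ℤ) → S) := {x | ∀ j ∈ s, x j = z j} with hBdef
      have e1 : (μ ({y : (Fin d → ℤ) → S | y i = z i} ∩ B)).toReal
          = ∫ x in B, Set.indicator {y : (Fin d → ℤ) → S | y i = z i}
              (fun _ => (1:ℝ)) x ∂μ := by
        rw [setIntegral_indicator (hAmeas i (z i)), setIntegral_const, smul_eq_mul,
          mul_one, Set.inter_comm, measureReal_def]
      have e2 : ∫ x in B, Set.indicator {y : (Fin d → ℤ) → S | y i = z i}
            (fun _ => (1:ℝ)) x ∂μ
          = ∫ x in B, (μ[Set.indicator {y : (Fin d → ℤ) → S | y i = z i}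
              (fun _ => (1:ℝ)) | MeasurableSpace.comap
                (fun (x : (Fin d → ℤ) → S) (j : {j : Fin d → ℤ // j ≠ i}) => x j)
                MeasurableSpace.pi]) x ∂μ :=
        (setIntegral_condExp (hmle i) (hint i (z i)) hB).symm
      have e3 : ∫ x in B, (μ[Set.indicator {y : (Fin d → ℤ) → S | y i = z i}
            (fun _ => (1:ℝ)) | MeasurableSpace.comap
              (fun (x : (Fin d → ℤ) → S) (j : {j : Fin d → ℤ // j ≠ i}) => x j)
              MeasurableSpace.pi]) x ∂μ ≤ (1 - δ) * (μ B).toReal := by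
        calc ∫ x in B, (μ[Set.indicator {y : (Fin d → ℤ) → S | y i = z i}
              (fun _ => (1:ℝ)) | MeasurableSpace.comap
                (fun (x : (Fin d → ℤ) → S) (j : {j : Fin d → ℤ // j ≠ i}) => x j)
                MeasurableSpace.pi]) x ∂μ
            ≤ ∫ _x in B, (1 - δ) ∂μ :=
              integral_mono_ae (integrable_condExp.restrict)
                (integrable_const _) (ae_restrict_of_ae (key i (z i)))
          _ = (1 - δ) * (μ B).toReal := by
              rw [setIntegral_const, smul_eq_mul, mul_comm, measureReal_def]
      have hreal : (μ ({y : (Fin d → ℤ) → S | y i = z i} ∩ B)).toReal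
          ≤ (1 - δ) * (μ B).toReal := by
        rw [e1, e2]; exact e3
      calc μ ({y : (Fin d → ℤ) → S | y i = z i} ∩ B)
          = ENNReal.ofReal ((μ ({y : (Fin d → ℤ) → S | y i = z i} ∩ B)).toReal) :=
            (ENNReal.ofReal_toReal (measure_ne_top μ _)).symm
        _ ≤ ENNReal.ofReal ((1 - δ) * (μ B).toReal) := ENNReal.ofReal_le_ofReal hreal
        _ = ENNReal.ofReal (1 - δ) * ENNReal.ofReal ((μ B).toReal) :=
            ENNReal.ofReal_mul hδ2
        _ = ENNReal.ofReal (1 - δ) * μ B := by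
            rw [ENNReal.ofReal_toReal (measure_ne_top μ _)]
    calc μ {x : (Fin d → ℤ) → S | ∀ j ∈ insert i s, x j = z j}
        = μ ({y : (Fin d → ℤ) → S | y i = z i}
            ∩ {x : (Fin d → ℤ) → S | ∀ j ∈ s, x j = z j}) := by rw [hAB]
      _ ≤ ENNReal.ofReal (1 - δ) * μ {x : (Fin d → ℤ) → S | ∀ j ∈ s, x j = z j} := hstep
      _ ≤ ENNReal.ofReal (1 - δ) * ENNReal.ofReal ((1 - δ) ^ s.card) :=
          mul_le_mul_right ih _
      _ = ENNReal.ofReal ((1 - δ) ^ (insert i s).card) := by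
          rw [← ENNReal.ofReal_mul hδ2, Finset.card_insert_of_notMem his, pow_succ,
            mul_comm]

end CAPaper
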